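/- The polynomial X⁵ − 10X⁴ − 481X³ − 4440X² − 16428X − 21904 is irreducible over the field ℚ(√37, √−2), the subfield of ℂ generated over ℚ by √37 and i√2. -/

import Mathlib

set_option synthInstance.maxHeartbeats 1000000
set_option maxHeartbeats 1000000

open Polynomial IntermediateField


open Polynomial

noncomputable def F3 : (ZMod 3)[X] := X ^ 5 + 2 * X ^ 4 + 2 * X ^ 3 + 2

lemma F3_natDegree : F3.natDegree = 5 := by unfold F3; compute_degree!

lemma F3_monic : F3.Monic := by unfold F3; monicity!

lemma F3_no_root (x : ZMod 3) : F3.eval x ≠ 0 := by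
  have h : ∀ x : ZMod 3, x ^ 5 + 2 * x ^ 4 + 2 * x ^ 3 + 2 ≠ 0 := by decide
  simpa [F3] using h x

lemma F3_div_quad (b c : ZMod 3) :
    F3 = (X ^ 2 + C b * X + C c) *
        (X ^ 3 + (2 - C b) * X ^ 2 + (2 - C c - 2 * C b + C b ^ 2) * X
          + (- 2 * C c - 2 * C b + 2 * C b * C c + 2 * C b ^ 2 - C b ^ 3))
      + C (-2*c + c^2 + 4*b*c + 2*b^2 - 3*b^2*c - 2*b^3 + b^4) * X
      + C (2 + 2*c^2 + 2*b*c - 2*b*c^2 - 2*b^2*c + b^3*c) := by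
  simp only [F3, map_add, map_sub, map_mul, map_pow, map_ofNat, map_one, map_neg]
  ring

lemma F3_not_quad_dvd (b c : ZMod 3) : ¬ (X ^ 2 + C b * X + C c ∣ F3) := by
  intro hdvd
  set r1 : ZMod 3 := -2*c + c^2 + 4*b*c + 2*b^2 - 3*b^2*c - 2*b^3 + b^4 with hr1
  set r0 : ZMod 3 := 2 + 2*c^2 + 2*b*c - 2*b*c^2 - 2*b^2*c + b^3*c with hr0
  have hrdvd : (X ^ 2 + C b * X + C c : (ZMod 3)[X]) ∣ C r1 * X + C r0 := by
    have heq : (C r1 * X + C r0 : (ZMod 3)[X]) = F3 - (X ^ 2 + C b * X + C c) *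
        (X ^ 3 + (2 - C b) * X ^ 2 + (2 - C c - 2 * C b + C b ^ 2) * X
          + (- 2 * C c - 2 * C b + 2 * C b * C c + 2 * C b ^ 2 - C b ^ 3)) := by
      rw [F3_div_quad b c]; ring
    rw [heq]
    exact dvd_sub hdvd (Dvd.intro _ rfl)
  have hdeg : (C r1 * X + C r0 : (ZMod 3)[X]).degree < (X ^ 2 + C b * X + C c : (ZMod 3)[X]).degree := by
    have h2 : (X ^ 2 + C b * X + C c : (ZMod 3)[X]).degree = 2 := by
      have := degree_quadratic (a := (1 : ZMod 3)) (b := b) (c := c) one_ne_zero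
      simpa using this
    rw [h2]
    exact lt_of_le_of_lt degree_linear_le (by decide)
  have hz : (C r1 * X + C r0 : (ZMod 3)[X]) = 0 :=
    eq_zero_of_dvd_of_degree_lt hrdvd hdeg
  have h1 : r1 = 0 := by
    have := congrArg (fun p => Polynomial.coeff p 1) hz
    simpa using this
  have h0 : r0 = 0 := by
    have := congrArg (fun p => Polynomial.coeff p 0) hz
    simpa using this
  have : ∀ b c : ZMod 3, ¬(-2*c + c^2 + 4*b*c + 2*b^2 - 3*b^2*c - 2*b^3 + b^4 = 0
      ∧ 2 + 2*c^2 + 2*b*c - 2*b*c^2 - 2*b^2*c + b^3*c = 0) := by decide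
  exact this b c ⟨by rw [← hr1]; exact h1, by rw [← hr0]; exact h0⟩

lemma F3_no_small_factor (g : (ZMod 3)[X]) (hg : g ≠ 0) (hdvd : g ∣ F3)
    (hd1 : 1 ≤ g.natDegree) (hd2 : g.natDegree ≤ 2) : False := by
  set u := g.leadingCoeff with hu
  have hu0 : u ≠ 0 := leadingCoeff_ne_zero.mpr hg
  set g₁ : (ZMod 3)[X] := g * C u⁻¹ with hg₁
  have hmon : g₁.Monic := monic_mul_leadingCoeff_inv hg
  have hdvd₁ : g₁ ∣ F3 := by
    refine dvd_trans ?_ hdvd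
    exact ⟨C u, by rw [hg₁, mul_assoc, ← C_mul, inv_mul_cancel₀ hu0, C_1, mul_one]⟩
  have hnd : g₁.natDegree = g.natDegree := by
    rw [hg₁, natDegree_mul_C (inv_ne_zero hu0)]
  interval_cases h : g.natDegree
  · -- degree 1
    have hx : g₁ = X + C (g₁.coeff 0) := hmon.eq_X_add_C hnd
    have hdvd2 : (X - C (-(g₁.coeff 0)) : (ZMod 3)[X]) ∣ F3 := by
      rw [map_neg, sub_neg_eq_add]; rw [hx] at hdvd₁; exact hdvd₁
    exact F3_no_root _ ((dvd_iff_isRoot).mp hdvd2)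
  · -- degree 2
    have hnd2 : g₁.natDegree = 2 := hnd
    have hc2 : g₁.coeff 2 = 1 := by
      have := hmon.leadingCoeff
      rwa [leadingCoeff, hnd2] at this
    have hrep : g₁ = X ^ 2 + C (g₁.coeff 1) * X + C (g₁.coeff 0) := by
      have h3 := g₁.as_sum_range' 3 (by omega)
      conv_lhs => rw [h3]
      simp only [Finset.sum_range_succ, Finset.sum_range_zero, zero_add,
        ← C_mul_X_pow_eq_monomial, hc2, C_1, one_mul, pow_zero, mul_one, pow_one]
      ring
    exact F3_not_quad_dvd (g₁.coeff 1) (g₁.coeff 0) (hrep ▸ hdvd₁)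

lemma F3_irred : Irreducible F3 := by
  constructor
  · intro hunit
    have := natDegree_eq_zero_of_isUnit hunit
    rw [F3_natDegree] at this; omega
  · intro g h heq
    by_contra hcon
    push_neg at hcon
    obtain ⟨hgu, hhu⟩ := hcon
    have hF0 : F3 ≠ 0 := F3_monic.ne_zero
    have hg0 : g ≠ 0 := by rintro rfl; simp at heq; exact hF0 heq
    have hh0 : h ≠ 0 := by rintro rfl; simp at heq; exact hF0 heq
    have hsum : g.natDegree + h.natDegree = 5 := by
      rw [← natDegree_mul hg0 hh0, ← heq, F3_natDegree]
    have hg1 : 1 ≤ g.natDegree := by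
      rcases Nat.eq_zero_or_pos g.natDegree with h0 | h1
      · obtain ⟨a, rfl⟩ := natDegree_eq_zero.mp h0
        exact absurd (isUnit_C.mpr (isUnit_iff_ne_zero.mpr (fun ha => hg0 (by rw [ha, C_0])))) hgu
      · exact h1
    have hh1 : 1 ≤ h.natDegree := by
      rcases Nat.eq_zero_or_pos h.natDegree with h0 | h1
      · obtain ⟨a, rfl⟩ := natDegree_eq_zero.mp h0
        exact absurd (isUnit_C.mpr (isUnit_iff_ne_zero.mpr (fun ha => hh0 (by rw [ha, C_0])))) hhu
      · exact h1
    rcases le_or_gt g.natDegree 2 with hle | hgt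
    · exact F3_no_small_factor g hg0 ⟨h, heq⟩ hg1 hle
    · exact F3_no_small_factor h hh0 ⟨g, by rw [heq, mul_comm]⟩ hh1 (by omega)

noncomputable def fZ : ℤ[X] :=
  X ^ 5 - 10 * X ^ 4 - 481 * X ^ 3 - 4440 * X ^ 2 - 16428 * X - 21904

lemma fZ_monic : fZ.Monic := by unfold fZ; monicity!

lemma fZ_map_zmod : fZ.map (Int.castRingHom (ZMod 3)) = F3 := by
  simp only [fZ, F3, Polynomial.map_sub, Polynomial.map_mul, Polynomial.map_pow,
    Polynomial.map_ofNat, Polynomial.map_X]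
  reduce_mod_char

lemma fZ_irred : Irreducible fZ :=
  fZ_monic.irreducible_of_irreducible_map (Int.castRingHom (ZMod 3)) fZ
    (fZ_map_zmod ▸ F3_irred)

noncomputable def fQ : ℚ[X] :=
  X ^ 5 - 10 * X ^ 4 - 481 * X ^ 3 - 4440 * X ^ 2 - 16428 * X - 21904

lemma fQ_eq_map : fQ = fZ.map (Int.castRingHom ℚ) := by
  simp only [fZ, fQ, Polynomial.map_sub, Polynomial.map_mul, Polynomial.map_pow,
    Polynomial.map_ofNat, Polynomial.map_X]

lemma fQ_monic : fQ.Monic := by unfold fQ; monicity!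

lemma fQ_natDegree : fQ.natDegree = 5 := by unfold fQ; compute_degree!

lemma fQ_irred : Irreducible fQ := by
  rw [fQ_eq_map]
  exact (Polynomial.IsPrimitive.Int.irreducible_iff_irreducible_map_cast fZ_monic.isPrimitive).mp fZ_irred

noncomputable abbrev aa : ℂ := (Real.sqrt 37 : ℂ)
noncomputable abbrev bb : ℂ := Complex.I * (Real.sqrt 2 : ℂ)

lemma ha2 : aa ^ 2 = 37 := by
  rw [← Complex.ofReal_pow, Real.sq_sqrt (by norm_num : (37:ℝ) ≥ 0)]
  norm_num

lemma hb2 : bb ^ 2 = -2 := by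
  rw [mul_pow, Complex.I_sq, ← Complex.ofReal_pow, Real.sq_sqrt (by norm_num : (2:ℝ) ≥ 0)]
  norm_num

lemma ha_int : IsIntegral ℚ aa :=
  ⟨X ^ 2 - 37, by monicity!, by simp [ha2]⟩

lemma finrank_Qa_le : Module.finrank ℚ ℚ⟮aa⟯ ≤ 2 := by
  rw [IntermediateField.adjoin.finrank ha_int]
  have h := minpoly.degree_le_of_ne_zero ℚ aa
    (p := X ^ 2 - 37) (by intro hcon; simpa using congrArg (fun p => p.coeff 2) hcon)
    (by simp [ha2, map_ofNat])
  have h2 : (X ^ 2 - 37 : ℚ[X]).natDegree = 2 := by compute_degree!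
  have := natDegree_le_natDegree h
  omega

lemma hb_int : IsIntegral (ℚ⟮aa⟯) bb :=
  ⟨X ^ 2 + 2, by monicity!, by
    have : (algebraMap ℚ⟮aa⟯ ℂ) 2 = 2 := map_ofNat _ 2
    simp [hb2]⟩

lemma finrank_K_le :
    Module.finrank ℚ (IntermediateField.adjoin ℚ ({aa, bb} : Set ℂ)) ≤ 4 ∧
    FiniteDimensional ℚ (IntermediateField.adjoin ℚ ({aa, bb} : Set ℂ)) := by
  have heq : IntermediateField.adjoin ℚ ({aa, bb} : Set ℂ)
      = (IntermediateField.adjoin ℚ⟮aa⟯ {bb}).restrictScalars ℚ := by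
    exact (IntermediateField.adjoin_simple_adjoin_simple (F := ℚ) (α := aa) bb).symm
  haveI h1 : FiniteDimensional ℚ ℚ⟮aa⟯ := IntermediateField.adjoin.finiteDimensional ha_int
  haveI h2 : FiniteDimensional ℚ⟮aa⟯ ℚ⟮aa⟯⟮bb⟯ := IntermediateField.adjoin.finiteDimensional hb_int
  have hb_le : Module.finrank ℚ⟮aa⟯ ℚ⟮aa⟯⟮bb⟯ ≤ 2 := by
    rw [IntermediateField.adjoin.finrank hb_int]
    have h := minpoly.degree_le_of_ne_zero ℚ⟮aa⟯ bb
      (p := X ^ 2 + 2) (by intro hcon; simpa using congrArg (fun p => p.coeff 2) hcon)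
      (by simp only [map_add, map_pow, aeval_X, map_ofNat, hb2]; ring)
    have h2 : (X ^ 2 + 2 : ℚ⟮aa⟯[X]).natDegree = 2 := by compute_degree!
    have := natDegree_le_natDegree h
    omega
  have hrank : Module.finrank ℚ (IntermediateField.adjoin ℚ ({aa, bb} : Set ℂ))
      = Module.finrank ℚ ℚ⟮aa⟯ * Module.finrank ℚ⟮aa⟯ ℚ⟮aa⟯⟮bb⟯ := by
    rw [heq]
    exact (Module.finrank_mul_finrank ℚ ℚ⟮aa⟯ ℚ⟮aa⟯⟮bb⟯).symm
  constructor
  · rw [hrank]; exact Nat.mul_le_mul finrank_Qa_le hb_le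
  · rw [heq]
    exact FiniteDimensional.trans ℚ ℚ⟮aa⟯ ℚ⟮aa⟯⟮bb⟯

/-- The quintic `X⁵ − 10X⁴ − 481X³ − 4440X² − 16428X − 21904` is irreducible over the
genus field `ℚ(√37, √−2)` of `ℚ(√−74)`. -/
theorem quintic_irreducible_over_genus_field :
    Irreducible (Polynomial.X ^ 5 - 10 * Polynomial.X ^ 4 - 481 * Polynomial.X ^ 3
        - 4440 * Polynomial.X ^ 2 - 16428 * Polynomial.X - 21904 :
      Polynomial (IntermediateField.adjoin ℚ
        ({(Real.sqrt 37 : ℂ), Complex.I * (Real.sqrt 2 : ℂ)} : Set ℂ))) := by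
  set K := IntermediateField.adjoin ℚ
    ({(Real.sqrt 37 : ℂ), Complex.I * (Real.sqrt 2 : ℂ)} : Set ℂ) with hK
  have hstmt : (X ^ 5 - 10 * X ^ 4 - 481 * X ^ 3 - 4440 * X ^ 2 - 16428 * X - 21904 : K[X])
      = fQ.map (algebraMap ℚ K) := by
    simp only [fQ, Polynomial.map_sub, Polynomial.map_mul, Polynomial.map_pow,
      Polynomial.map_ofNat, Polynomial.map_X]
  rw [hstmt]
  haveI hfd : FiniteDimensional ℚ K := finrank_K_le.2
  -- a root of fQ in ℂ
  have hdegpos : 0 < (fQ.map (algebraMap ℚ ℂ)).degree := by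
    have h5 : (fQ.map (algebraMap ℚ ℂ)).natDegree = 5 := by
      rw [fQ_monic.natDegree_map, fQ_natDegree]
    rw [degree_eq_natDegree (fun h0 => by simp [h0] at h5), h5]
    norm_num
  obtain ⟨α, hα⟩ := Complex.exists_root hdegpos
  have haev : Polynomial.aeval α fQ = 0 := by
    rwa [aeval_def, ← eval_map]
  have hint : IsIntegral ℚ α := ⟨fQ, fQ_monic, by rwa [aeval_def] at haev⟩
  have hminQ : minpoly ℚ α = fQ := (minpoly.eq_of_irreducible_of_monic fQ_irred haev fQ_monic).symm
  have hintK : IsIntegral K α := hint.tower_top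
  have hdvd : minpoly K α ∣ fQ.map (algebraMap ℚ K) :=
    minpoly.dvd K α (by rw [aeval_map_algebraMap]; exact haev)
  have hmapnd : (fQ.map (algebraMap ℚ K)).natDegree = 5 := by
    rw [fQ_monic.natDegree_map, fQ_natDegree]
  have hd_le : (minpoly K α).natDegree ≤ 5 := by
    have := natDegree_le_of_dvd hdvd (fQ_monic.map (algebraMap ℚ K)).ne_zero
    omega
  haveI : FiniteDimensional K K⟮α⟯ := IntermediateField.adjoin.finiteDimensional hintK
  have hL : Module.finrank K K⟮α⟯ = (minpoly K α).natDegree :=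
    IntermediateField.adjoin.finrank hintK
  have hE : Module.finrank ℚ ℚ⟮α⟯ = 5 := by
    rw [IntermediateField.adjoin.finrank hint, hminQ, fQ_natDegree]
  have hle : ℚ⟮α⟯ ≤ (K⟮α⟯).restrictScalars ℚ := by
    rw [IntermediateField.adjoin_le_iff, Set.singleton_subset_iff]
    exact IntermediateField.mem_adjoin_simple_self K α
  have hdvd2 : Module.finrank ℚ ℚ⟮α⟯ ∣ Module.finrank ℚ ((K⟮α⟯).restrictScalars ℚ) :=
    ⟨_, (IntermediateField.finrank_bot_mul_relfinrank hle).symm⟩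
  have hres : Module.finrank ℚ ((K⟮α⟯).restrictScalars ℚ) = Module.finrank ℚ (K⟮α⟯) := rfl
  have htower : Module.finrank ℚ (K⟮α⟯ : IntermediateField K ℂ)
      = Module.finrank ℚ K * Module.finrank K K⟮α⟯ :=
    (Module.finrank_mul_finrank ℚ K K⟮α⟯).symm
  have h5dvd : 5 ∣ Module.finrank ℚ K * (minpoly K α).natDegree := by
    rw [← hL, ← htower, ← hres, ← hE]
    exact hdvd2
  have hKpos : 0 < Module.finrank ℚ K := Module.finrank_pos
  have hKle : Module.finrank ℚ K ≤ 4 := finrank_K_le.1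
  have hnotdvd : ¬ (5 ∣ Module.finrank ℚ K) := by
    intro h
    have := Nat.le_of_dvd hKpos h
    omega
  have h5d : 5 ∣ (minpoly K α).natDegree :=
    ((Nat.Prime.dvd_mul (by norm_num)).mp h5dvd).resolve_left hnotdvd
  have hdpos : 0 < (minpoly K α).natDegree := minpoly.natDegree_pos hintK
  have hd5 : (minpoly K α).natDegree = 5 := by
    have := Nat.le_of_dvd hdpos h5d
    omega
  have heqf : fQ.map (algebraMap ℚ K) = minpoly K α :=
    Polynomial.eq_of_monic_of_dvd_of_natDegree_le (minpoly.monic hintK)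
      (fQ_monic.map (algebraMap ℚ K)) hdvd (by omega)
  rw [heqf]
  exact minpoly.irreducible hintK
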